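/- Let A be a commutative ℂ-algebra together with elements x₁, …, xₙ ∈ A such that the Kähler differentials dx₁, …, dxₙ form an A-module basis of Ω_{A/ℂ} (an étale coordinate system). For a ∈ A define ∂ᵢ(a) ∈ A to be the i-th coordinate of da in this basis, so that da = Σᵢ ∂ᵢ(a)·dxᵢ. Let f₁, …, fₙ ∈ A satisfy the almost-closedness condition: for all i, j, the element ∂ⱼ(fᵢ) − ∂ᵢ(fⱼ) lies in the ideal (f₁, …, fₙ) generated by the fᵢ. Let K be a field equipped with a ℂ-algebra structure, let γ : A → K[[t]] be a ℂ-algebra homomorphism, and let m > 0 be an integer such that t^m divides γ(fᵢ) for all i (i.e., the coefficient of t^p in γ(fᵢ) vanishes for all p < m and all i). Then the following identity holds in the module of Kähler differentials Ω_{K/ℂ}: Σᵢ (coefficient of t^m in γ(fᵢ)) · d(coefficient of t^0 in γ(xᵢ)) = 0. -/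

import Mathlib

open PowerSeries TrivSqZeroExt

/-- Chain rule: any `ℂ`-derivation precomposed with an algebra hom out of `A`
expands along étale coordinates. -/
theorem chainRuleAux
    (A : Type) [CommRing A] [Algebra ℂ A] (n : ℕ) (x : Fin n → A)
    (b : Module.Basis (Fin n) A (KaehlerDifferential ℂ A))
    (hb : ∀ i, b i = KaehlerDifferential.D ℂ A (x i))
    {R : Type} [CommRing R] [Algebra ℂ R]
    {M : Type} [AddCommGroup M] [Module R M] [Module ℂ M] [IsScalarTower ℂ R M]
    (ψ : A →ₐ[ℂ] R) (D : Derivation ℂ R M) (a : A) :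
    D (ψ a) = ∑ i, ψ (b.repr (KaehlerDifferential.D ℂ A a) i) • D (ψ (x i)) := by
  letI : Algebra A R := ψ.toRingHom.toAlgebra
  haveI : IsScalarTower ℂ A R := IsScalarTower.of_algebraMap_eq fun c => (ψ.commutes c).symm
  letI : Module A M := Module.compHom M (algebraMap A R)
  haveI : IsScalarTower A R M := ⟨fun a r m => mul_smul (ψ a) r m⟩
  haveI : IsScalarTower ℂ A M := ⟨fun c a m => by
    show ψ (c • a) • m = c • (ψ a • m)
    rw [map_smul, smul_assoc]⟩
  let D' : Derivation ℂ A M := D.compAlgebraMap A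
  have h1 : ∀ z : A, D' z = D (ψ z) := fun z => rfl
  have h2 : D (ψ a) = D'.liftKaehlerDifferential (KaehlerDifferential.D ℂ A a) :=
    ((D'.liftKaehlerDifferential_comp_D a).trans (h1 a)).symm
  rw [h2]
  generalize KaehlerDifferential.D ℂ A a = v
  conv_lhs => rw [← b.sum_repr v]
  rw [map_sum]
  refine Finset.sum_congr rfl fun i _ => ?_
  rw [map_smul, hb i, D'.liftKaehlerDifferential_comp_D (x i), h1]
  rfl

section Aux
variable (K : Type) [Field K] [Algebra ℂ K]

local notation "Ω" => KaehlerDifferential ℂ K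

noncomputable local instance opMod : Module Kᵐᵒᵖ Ω :=
  Module.compHom _ ((RingHom.id K).fromOpposite mul_comm)
local instance : IsCentralScalar K Ω := ⟨fun _ _ => rfl⟩
local instance : IsScalarTower ℂ Kᵐᵒᵖ Ω := ⟨fun c r m => by
  show (MulOpposite.unop (c • r)) • m = c • ((MulOpposite.unop r) • m)
  rw [MulOpposite.unop_smul, smul_assoc, smul_comm]⟩
local instance : SMulCommClass K Kᵐᵒᵖ Ω := ⟨fun r s m => by
  show r • (MulOpposite.unop s) • m = (MulOpposite.unop s) • r • m
  rw [smul_comm]⟩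

/-- `a ↦ (a, da)` as a `ℂ`-algebra hom into the trivial square-zero extension. -/
noncomputable def phi : K →ₐ[ℂ] TrivSqZeroExt K Ω where
  toFun a := inl a + inr (KaehlerDifferential.D ℂ K a)
  map_one' := by simp
  map_mul' a c := by
    refine TrivSqZeroExt.ext (by simp) ?_
    simp [Derivation.leibniz, op_smul_eq_smul]
  map_zero' := by simp
  map_add' a c := by
    refine TrivSqZeroExt.ext (by simp) ?_
    simp
  commutes' c := by
    refine TrivSqZeroExt.ext (by simp [algebraMap_eq_inl']) ?_
    simp [algebraMap_eq_inl', Derivation.map_algebraMap]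

variable {R S : Type} [CommRing R] [Algebra ℂ R] [CommRing S] [Algebra ℂ S]

/-- `PowerSeries.map` as a `ℂ`-algebra hom. -/
noncomputable def mapAlgHomC (f : R →ₐ[ℂ] S) : PowerSeries R →ₐ[ℂ] PowerSeries S :=
  { PowerSeries.map (f : R →+* S) with
    commutes' := fun c => by
      simp [PowerSeries.algebraMap_apply, PowerSeries.map_C] }

@[simp] lemma mapAlgHomC_apply (f : R →ₐ[ℂ] S) (g : PowerSeries R) :
    mapAlgHomC f g = PowerSeries.map (f : R →+* S) g := rfl


set_option maxHeartbeats 2000000 in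
theorem key_identity
    (A : Type) [CommRing A] [Algebra ℂ A] (n : ℕ) (x : Fin n → A)
    (b : Module.Basis (Fin n) A (KaehlerDifferential ℂ A))
    (hb : ∀ i, b i = KaehlerDifferential.D ℂ A (x i))
    (f : Fin n → A)
    (halmost : ∀ i j : Fin n,
      b.repr (KaehlerDifferential.D ℂ A (f i)) j - b.repr (KaehlerDifferential.D ℂ A (f j)) i
        ∈ Ideal.span (Set.range f))
    (γ : A →ₐ[ℂ] PowerSeries K) (m : ℕ) (hm : 0 < m)
    (hdiv : ∀ i : Fin n, ∀ p : ℕ, p < m → PowerSeries.coeff (R := K) p (γ (f i)) = 0) :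
    ∑ i : Fin n, PowerSeries.coeff (R := K) m (γ (f i)) •
        KaehlerDifferential.D ℂ K (PowerSeries.constantCoeff (R := K) (γ (x i))) = 0 := by
  classical
  obtain ⟨k, rfl⟩ : ∃ k, m = k + 1 := ⟨m - 1, (Nat.succ_pred_eq_of_pos hm).symm⟩
  set dK := KaehlerDifferential.D ℂ K with hdK
  set dA := KaehlerDifferential.D ℂ A with hdA
  set u : Fin n → Fin n → A := fun i j => b.repr (dA (f i)) j with hu
  -- the two algebra maps to power series over the square-zero extension
  set ι : PowerSeries K →ₐ[ℂ] PowerSeries (TrivSqZeroExt K Ω) :=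
    mapAlgHomC (inlAlgHom ℂ K Ω) with hι
  set Φ : PowerSeries K →ₐ[ℂ] PowerSeries (TrivSqZeroExt K Ω) :=
    mapAlgHomC (phi K) with hΦ
  -- module structure on the target via ι
  letI : Module (PowerSeries K) (PowerSeries (TrivSqZeroExt K Ω)) :=
    Module.compHom _ (ι : PowerSeries K →+* PowerSeries (TrivSqZeroExt K Ω))
  haveI : IsScalarTower ℂ (PowerSeries K) (PowerSeries (TrivSqZeroExt K Ω)) :=
    ⟨fun c g y => by
      show ι (c • g) * y = c • (ι g * y)
      rw [map_smul, smul_mul_assoc]⟩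
  have hsm : ∀ (g : PowerSeries K) (y : PowerSeries (TrivSqZeroExt K Ω)),
      g • y = ι g * y := fun _ _ => rfl
  -- coefficients of `Φ g - ι g`
  have hcδ : ∀ (g : PowerSeries K) (p : ℕ),
      PowerSeries.coeff p (Φ g - ι g) = inr (dK (PowerSeries.coeff (R := K) p g)) := by
    intro g p
    rw [map_sub, hΦ, hι, mapAlgHomC_apply, mapAlgHomC_apply, PowerSeries.coeff_map,
      PowerSeries.coeff_map]
    show (inl (PowerSeries.coeff (R := K) p g) + inr (dK (PowerSeries.coeff (R := K) p g)))
        - inl (PowerSeries.coeff (R := K) p g) = _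
    abel
  have hmulδ : ∀ g h : PowerSeries K, (Φ g - ι g) * (Φ h - ι h) = 0 := by
    intro g h
    refine PowerSeries.ext fun p => ?_
    rw [PowerSeries.coeff_mul, map_zero]
    refine Finset.sum_eq_zero fun q _ => ?_
    rw [hcδ, hcδ, inr_mul_inr]
  -- the square-zero derivation
  set δ : Derivation ℂ (PowerSeries K) (PowerSeries (TrivSqZeroExt K Ω)) :=
    { toFun := fun g => Φ g - ι g
      map_add' := fun g h => by
        show Φ (g + h) - ι (g + h) = (Φ g - ι g) + (Φ h - ι h)
        rw [map_add, map_add]; abel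
      map_smul' := fun c g => by
        show Φ (c • g) - ι (c • g) = (RingHom.id ℂ) c • (Φ g - ι g)
        rw [map_smul, map_smul, RingHom.id_apply, smul_sub]
      map_one_eq_zero' := by simp
      leibniz' := fun g h => by
        show Φ (g * h) - ι (g * h) = g • (Φ h - ι h) + h • (Φ g - ι g)
        rw [hsm, hsm, map_mul, map_mul]
        linear_combination hmulδ g h } with hδ
  have hδapp : ∀ g : PowerSeries K, δ g = Φ g - ι g := fun _ => rfl
  -- the t-derivative
  set Dt : Derivation ℂ (PowerSeries K) (PowerSeries K) :=
    (PowerSeries.derivative K).restrictScalars ℂ with hDt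
  have hDtapp : ∀ g : PowerSeries K, Dt g = PowerSeries.derivativeFun g := fun _ => rfl
  -- chain rules
  have hA : ∀ i, Dt (γ (f i)) = ∑ j, γ (u i j) * Dt (γ (x j)) := by
    intro i
    rw [chainRuleAux A n x b hb γ Dt (f i)]
    exact Finset.sum_congr rfl fun j _ => smul_eq_mul _ _
  have hB : ∀ i, δ (γ (f i)) = ∑ j, ι (γ (u i j)) * δ (γ (x j)) := by
    intro i
    rw [@chainRuleAux A _ _ n x b hb _ _ _ _ _ _ _ (by assumption) γ δ (f i)]
    exact Finset.sum_congr rfl fun j _ => hsm _ _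
  -- elements of the ideal have vanishing low coefficients
  have hIdeal : ∀ w ∈ Ideal.span (Set.range f), ∀ p : ℕ, p < k + 1 →
      PowerSeries.coeff (R := K) p (γ w) = 0 := by
    intro w hw
    have hw2 : γ w ∈ Ideal.span ((γ : A → PowerSeries K) '' Set.range f) := by
      rw [← Ideal.map_span]
      exact Ideal.mem_map_of_mem _ hw
    refine Submodule.span_induction ?_ ?_ ?_ ?_ hw2
    · rintro g ⟨a, ⟨i, rfl⟩, rfl⟩ p hp
      exact hdiv i p hp
    · intro p hp
      simp
    · intro g h _ _ hg hh p hp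
      rw [map_add, hg p hp, hh p hp, add_zero]
    · intro r g _ hg p hp
      rw [smul_eq_mul, PowerSeries.coeff_mul]
      refine Finset.sum_eq_zero fun q hq => ?_
      rw [Finset.HasAntidiagonal.mem_antidiagonal] at hq
      rw [hg q.2 (lt_of_le_of_lt (le_of_add_le_right hq.le) hp), mul_zero]
  have hcι : ∀ (g : PowerSeries K) (p : ℕ),
      PowerSeries.coeff p (ι g) = inl (PowerSeries.coeff (R := K) p g) := fun g p => by
    rw [hι, mapAlgHomC_apply, PowerSeries.coeff_map]; rfl
  -- Step 1: the antisymmetrized sum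
  have key0 : (∑ i, (ι (Dt (γ (f i))) * δ (γ (x i)) - δ (γ (f i)) * ι (Dt (γ (x i)))))
      = ∑ i, ∑ j, ι (γ (u i j - u j i)) * (ι (Dt (γ (x j))) * δ (γ (x i))) := by
    have e1 : ∀ i, ι (Dt (γ (f i))) = ∑ j, ι (γ (u i j)) * ι (Dt (γ (x j))) := fun i => by
      rw [hA i, map_sum]
      exact Finset.sum_congr rfl fun j _ => map_mul ι _ _
    have h2nd : (∑ i, ∑ j, ι (γ (u i j)) * δ (γ (x j)) * ι (Dt (γ (x i))))
        = ∑ i, ∑ j, ι (γ (u j i)) * δ (γ (x i)) * ι (Dt (γ (x j))) := Finset.sum_comm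
    calc (∑ i, (ι (Dt (γ (f i))) * δ (γ (x i)) - δ (γ (f i)) * ι (Dt (γ (x i)))))
        = ∑ i, ∑ j, (ι (γ (u i j)) * ι (Dt (γ (x j))) * δ (γ (x i))
            - ι (γ (u i j)) * δ (γ (x j)) * ι (Dt (γ (x i)))) := by
          refine Finset.sum_congr rfl fun i _ => ?_
          rw [e1 i, hB i, Finset.sum_mul, Finset.sum_mul, ← Finset.sum_sub_distrib]
      _ = (∑ i, ∑ j, ι (γ (u i j)) * ι (Dt (γ (x j))) * δ (γ (x i)))
            - ∑ i, ∑ j, ι (γ (u i j)) * δ (γ (x j)) * ι (Dt (γ (x i))) := by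
          simp only [Finset.sum_sub_distrib]
      _ = (∑ i, ∑ j, ι (γ (u i j)) * ι (Dt (γ (x j))) * δ (γ (x i)))
            - ∑ i, ∑ j, ι (γ (u j i)) * δ (γ (x i)) * ι (Dt (γ (x j))) := by rw [h2nd]
      _ = ∑ i, ∑ j, (ι (γ (u i j)) * ι (Dt (γ (x j))) * δ (γ (x i))
            - ι (γ (u j i)) * δ (γ (x i)) * ι (Dt (γ (x j)))) := by
          simp only [Finset.sum_sub_distrib]
      _ = ∑ i, ∑ j, ι (γ (u i j - u j i)) * (ι (Dt (γ (x j))) * δ (γ (x i))) := by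
          refine Finset.sum_congr rfl fun i _ => Finset.sum_congr rfl fun j _ => ?_
          rw [map_sub, map_sub]
          ring
  -- Step 2: its k-th coefficient vanishes
  have hzero : PowerSeries.coeff k
      (∑ i, ∑ j, ι (γ (u i j - u j i)) * (ι (Dt (γ (x j))) * δ (γ (x i)))) = 0 := by
    rw [map_sum]
    refine Finset.sum_eq_zero fun i _ => ?_
    rw [map_sum]
    refine Finset.sum_eq_zero fun j _ => ?_
    rw [PowerSeries.coeff_mul]
    refine Finset.sum_eq_zero fun q hq => ?_
    rw [Finset.HasAntidiagonal.mem_antidiagonal] at hq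
    rw [hcι, hIdeal _ (halmost i j) q.1 (by omega), inl_zero, zero_mul]
  -- Step 3: direct computation of the `snd` of the k-th coefficient
  have hsnd : snd (PowerSeries.coeff k
        (∑ i, (ι (Dt (γ (f i))) * δ (γ (x i)) - δ (γ (f i)) * ι (Dt (γ (x i)))))) =
      ∑ i, (PowerSeries.coeff (R := K) (k + 1) (γ (f i)) * ((k + 1 : ℕ) : K)) •
        dK (PowerSeries.coeff (R := K) 0 (γ (x i))) := by
    rw [map_sum, snd_sum]
    refine Finset.sum_congr rfl fun i _ => ?_
    rw [map_sub, snd_sub]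
    have h1 : snd (PowerSeries.coeff k (ι (Dt (γ (f i))) * δ (γ (x i))))
        = (PowerSeries.coeff (R := K) (k + 1) (γ (f i)) * ((k + 1 : ℕ) : K)) •
          dK (PowerSeries.coeff (R := K) 0 (γ (x i))) := by
      rw [PowerSeries.coeff_mul, snd_sum]
      rw [Finset.sum_eq_single_of_mem (k, 0)
        (Finset.HasAntidiagonal.mem_antidiagonal.mpr (add_zero k)) ?zeroes]
      case zeroes =>
        intro q hq hne
        rw [Finset.HasAntidiagonal.mem_antidiagonal] at hq
        have hq1 : q.1 < k := by
          rcases Nat.lt_or_ge q.1 k with h | h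
          · exact h
          · exact absurd (Prod.ext (le_antisymm (by omega) h) (by omega)) hne
        rw [hcι, hδapp, hcδ, inl_mul_inr, snd_inr, hDtapp,
          show ∀ (g : PowerSeries K) (p : ℕ), PowerSeries.coeff p g.derivativeFun = PowerSeries.coeff (p + 1) g * (p + 1) from fun g p => PowerSeries.coeff_derivative g p, hdiv i (q.1 + 1) (by omega), zero_mul, zero_smul]
      rw [hcι, hδapp, hcδ, inl_mul_inr, snd_inr, hDtapp, show ∀ (g : PowerSeries K) (p : ℕ), PowerSeries.coeff p g.derivativeFun = PowerSeries.coeff (p + 1) g * (p + 1) from fun g p => PowerSeries.coeff_derivative g p]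
      norm_num
    have h2 : snd (PowerSeries.coeff k (δ (γ (f i)) * ι (Dt (γ (x i))))) = 0 := by
      rw [PowerSeries.coeff_mul, snd_sum]
      refine Finset.sum_eq_zero fun q hq => ?_
      rw [Finset.HasAntidiagonal.mem_antidiagonal] at hq
      rw [hδapp, hcδ, hcι, inr_mul_inl, snd_inr, hdiv i q.1 (by omega), map_zero, smul_zero]
    rw [h1, h2, sub_zero]
  -- Step 4: conclude
  have hfin : ∑ i, (PowerSeries.coeff (R := K) (k + 1) (γ (f i)) * ((k + 1 : ℕ) : K)) •
      dK (PowerSeries.coeff (R := K) 0 (γ (x i))) = 0 := by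
    rw [← hsnd, key0, hzero, snd_zero]
  have hrw : ∀ i : Fin n, (PowerSeries.coeff (R := K) (k + 1) (γ (f i)) * ((k + 1 : ℕ) : K)) •
        dK (PowerSeries.coeff (R := K) 0 (γ (x i)))
      = ((k + 1 : ℕ) : K) • PowerSeries.coeff (R := K) (k + 1) (γ (f i)) •
        dK (PowerSeries.coeff (R := K) 0 (γ (x i))) := fun i => by
    rw [mul_comm, mul_smul]
  rw [Finset.sum_congr rfl fun i _ => hrw i, ← Finset.smul_sum] at hfin
  haveI : CharZero K := charZero_of_injective_algebraMap (algebraMap ℂ K).injective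
  rcases smul_eq_zero.mp hfin with h | h
  · exact absurd h (Nat.cast_ne_zero.mpr (Nat.succ_ne_zero k))
  · simpa [PowerSeries.coeff_zero_eq_constantCoeff] using h

end Aux

/-- **Key identity in the proof of Theorem 4.5 (claim (claim)).**
Let `A` be a `ℂ`-algebra with étale coordinates `x₁, …, xₙ` (so the `d xᵢ` form a basis of
`Ω_{A/ℂ}`), and let `f₁, …, fₙ ∈ A` satisfy the almost-closedness condition
`∂ⱼ fᵢ − ∂ᵢ fⱼ ∈ (f₁, …, fₙ)`.  If `γ : A → K[[t]]` is a `ℂ`-algebra homomorphism to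
power series over a field `K` and `m > 0` is such that `t^m ∣ γ(fᵢ)` for all `i`,
then `Σᵢ Fᵢ^{(m)} · d cᵢ^{(0)} = 0` in `Ω_{K/ℂ}`, where `Fᵢ^{(m)}` is the `t^m`-coefficient
of `γ(fᵢ)` and `cᵢ^{(0)}` the constant coefficient of `γ(xᵢ)`. -/
theorem almost_closed_one_form_key_identity
    (A : Type) [CommRing A] [Algebra ℂ A] (n : ℕ) (x : Fin n → A)
    (b : Module.Basis (Fin n) A (KaehlerDifferential ℂ A))
    (hb : ∀ i, b i = KaehlerDifferential.D ℂ A (x i))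
    (f : Fin n → A)
    (halmost : ∀ i j : Fin n,
      b.repr (KaehlerDifferential.D ℂ A (f i)) j - b.repr (KaehlerDifferential.D ℂ A (f j)) i
        ∈ Ideal.span (Set.range f))
    (K : Type) [Field K] [Algebra ℂ K]
    (γ : A →ₐ[ℂ] PowerSeries K) (m : ℕ) (hm : 0 < m)
    (hdiv : ∀ i : Fin n, ∀ p : ℕ, p < m → PowerSeries.coeff (R := K) p (γ (f i)) = 0) :
    ∑ i : Fin n, PowerSeries.coeff (R := K) m (γ (f i)) •
        KaehlerDifferential.D ℂ K (PowerSeries.constantCoeff (R := K) (γ (x i))) = 0 :=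
  key_identity K A n x b hb f halmost γ m hm hdiv
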